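/- Let D be a subset of the unit sphere of a real Hilbert space H whose closed linear span is H, and suppose ρ(D) = inf_{‖x‖=1} sup_{g∈D} |⟨x,g⟩| > 0. Let (tₖ) be a sequence in (0,1] and let (xₙ) satisfy x_{n+1} = xₙ - ⟨xₙ, g_{n+1}⟩ g_{n+1} where g_{n+1} ∈ D satisfies |⟨xₙ, g_{n+1}⟩| ≥ t_{n+1} sup_{g∈D} |⟨xₙ, g⟩|. Then ‖xₙ‖² ≤ ‖x₀‖² ∏_{k=1}^{n} (1 - tₖ² ρ(D)²) for all n. -/

import Mathlib

theorem weak_greedy_exponential_rate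
    {H : Type*} [NormedAddCommGroup H] [InnerProductSpace ℝ H] [CompleteSpace H]
    (D : Set H) (hD : ∀ g ∈ D, ‖g‖ = 1)
    (hspan : (Submodule.span ℝ D).topologicalClosure = ⊤)
    (ρ : ℝ)
    (hρdef : ρ = ⨅ x : {x : H // ‖x‖ = 1}, ⨆ g : D, |(inner ℝ (x : H) (g : H) : ℝ)|)
    (hρ : 0 < ρ)
    (t : ℕ → ℝ) (ht : ∀ k, t k ∈ Set.Ioc (0 : ℝ) 1)
    (x : ℕ → H) (g : ℕ → H) (hg : ∀ n, g (n + 1) ∈ D)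
    (hrec : ∀ n, x (n + 1) = x n - (inner ℝ (x n) (g (n + 1)) : ℝ) • g (n + 1))
    (hweak : ∀ n, ∀ h ∈ D,
      t (n + 1) * |(inner ℝ (x n) h : ℝ)| ≤ |(inner ℝ (x n) (g (n + 1)) : ℝ)|) :
    ∀ n : ℕ, ‖x n‖ ^ 2 ≤ ‖x 0‖ ^ 2 * ∏ k ∈ Finset.Icc 1 n, (1 - t k ^ 2 * ρ ^ 2) := by
  have hbdd : BddBelow (Set.range fun x : {x : H // ‖x‖ = 1} =>
      ⨆ g : D, |(inner ℝ (x : H) (g : H) : ℝ)|) := by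
    refine ⟨0, ?_⟩
    rintro r ⟨y, rfl⟩
    exact Real.iSup_nonneg fun h => abs_nonneg _
  -- H is nontrivial
  have hnontriv : Nontrivial H := by
    by_contra hcon
    have : IsEmpty {x : H // ‖x‖ = 1} := by
      constructor
      rintro ⟨y, hy⟩
      have : Subsingleton H := not_nontrivial_iff_subsingleton.mp hcon
      have : y = 0 := Subsingleton.elim _ _
      simp [this] at hy
    rw [hρdef] at hρ
    rw [Real.iInf_of_isEmpty] at hρ
    exact lt_irrefl 0 hρ
  -- ρ ≤ 1
  have hρ1 : ρ ≤ 1 := by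
    obtain ⟨y, hy⟩ := exists_norm_eq H (zero_le_one (α := ℝ))
    have h1 : ρ ≤ ⨆ g : D, |(inner ℝ (y : H) (g : H) : ℝ)| := by
      rw [hρdef]
      exact ciInf_le hbdd ⟨y, hy⟩
    have h2 : (⨆ g : D, |(inner ℝ (y : H) (g : H) : ℝ)|) ≤ 1 := by
      refine Real.iSup_le (fun h => ?_) zero_le_one
      calc |(inner ℝ y (h : H) : ℝ)| ≤ ‖y‖ * ‖(h : H)‖ := abs_real_inner_le_norm _ _
        _ = 1 := by rw [hy, hD _ h.2]; ring
    linarith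
  -- key inequality
  have key : ∀ n, t (n + 1) * ρ * ‖x n‖ ≤ |(inner ℝ (x n) (g (n + 1)) : ℝ)| := by
    intro n
    rcases eq_or_ne (x n) 0 with h0 | h0
    · simp [h0]
    have hN : (0:ℝ) < ‖x n‖ := norm_pos_iff.mpr h0
    have htpos := (ht (n + 1)).1
    have htN : 0 < t (n + 1) * ‖x n‖ := mul_pos htpos hN
    set c := |(inner ℝ (x n) (g (n + 1)) : ℝ)| with hc
    have hu : ‖(‖x n‖⁻¹ • x n)‖ = 1 := by
      rw [norm_smul, Real.norm_eq_abs, abs_inv, abs_norm]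
      exact inv_mul_cancel₀ (ne_of_gt hN)
    have h1 : ρ ≤ ⨆ gg : D, |(inner ℝ ((‖x n‖⁻¹ • x n) : H) (gg : H) : ℝ)| := by
      rw [hρdef]
      exact ciInf_le hbdd ⟨‖x n‖⁻¹ • x n, hu⟩
    have h2 : (⨆ gg : D, |(inner ℝ ((‖x n‖⁻¹ • x n) : H) (gg : H) : ℝ)|) ≤ c / (t (n + 1) * ‖x n‖) := by
      refine Real.iSup_le (fun h => ?_) (div_nonneg (abs_nonneg _) htN.le)
      rw [real_inner_smul_left, abs_mul, abs_inv, abs_norm, le_div_iff₀ htN]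
      have := hweak n h h.2
      calc ‖x n‖⁻¹ * |(inner ℝ (x n) (h : H) : ℝ)| * (t (n + 1) * ‖x n‖)
          = t (n + 1) * |(inner ℝ (x n) (h : H) : ℝ)| := by field_simp
        _ ≤ c := this
    have h3 : ρ ≤ c / (t (n + 1) * ‖x n‖) := le_trans h1 h2
    have h4 := (le_div_iff₀ htN).mp h3
    linarith [h4]
  -- energy identity
  have hnorm : ∀ n, ‖x (n + 1)‖ ^ 2 = ‖x n‖ ^ 2 - (inner ℝ (x n) (g (n + 1)) : ℝ) ^ 2 := by
    intro n
    have hg1 : ‖g (n + 1)‖ = 1 := hD _ (hg n)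
    rw [hrec n, @norm_sub_sq_real, real_inner_smul_right, norm_smul, Real.norm_eq_abs, hg1]
    rw [mul_one, sq_abs]
    ring
  intro n
  induction n with
  | zero => simp
  | succ n ih =>
    have htpos := (ht (n + 1)).1
    have ht1 := (ht (n + 1)).2
    have htρ : t (n + 1) * ρ ≤ 1 := mul_le_one₀ ht1 hρ.le hρ1
    have hfact : 0 ≤ 1 - t (n + 1) ^ 2 * ρ ^ 2 := by nlinarith [mul_nonneg htpos.le hρ.le]
    have h0 : 0 ≤ t (n + 1) * ρ * ‖x n‖ := by positivity
    have hsq : (t (n + 1) * ρ * ‖x n‖) ^ 2 ≤ (inner ℝ (x n) (g (n + 1)) : ℝ) ^ 2 := by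
      have := key n
      nlinarith [abs_nonneg (inner ℝ (x n) (g (n + 1)) : ℝ), sq_abs (inner ℝ (x n) (g (n + 1)) : ℝ)]
    have step : ‖x (n + 1)‖ ^ 2 ≤ ‖x n‖ ^ 2 * (1 - t (n + 1) ^ 2 * ρ ^ 2) := by
      rw [hnorm n]; nlinarith
    have hprod : (∏ k ∈ Finset.Icc 1 (n + 1), (1 - t k ^ 2 * ρ ^ 2))
        = (∏ k ∈ Finset.Icc 1 n, (1 - t k ^ 2 * ρ ^ 2)) * (1 - t (n + 1) ^ 2 * ρ ^ 2) := by
      rw [Finset.prod_Icc_succ_top (Nat.succ_le_succ (Nat.zero_le n))]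
    calc ‖x (n + 1)‖ ^ 2 ≤ ‖x n‖ ^ 2 * (1 - t (n + 1) ^ 2 * ρ ^ 2) := step
      _ ≤ (‖x 0‖ ^ 2 * ∏ k ∈ Finset.Icc 1 n, (1 - t k ^ 2 * ρ ^ 2)) * (1 - t (n + 1) ^ 2 * ρ ^ 2) :=
          mul_le_mul_of_nonneg_right ih hfact
      _ = ‖x 0‖ ^ 2 * ∏ k ∈ Finset.Icc 1 (n + 1), (1 - t k ^ 2 * ρ ^ 2) := by
          rw [hprod]; ring
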